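/- Let G be a finite simple graph and suppose the pair (c, w) of a generalized edge-colouring and a weighting of G is k-valid for some k ≥ 1. Then every vertex of G has degree at least k. Consequently μ̄(G) ≤ δ(G), the minimum degree of G. -/

import Mathlib

/-- A perfect matching of `G`: a set of edges of `G` such that every vertex
lies in exactly one edge of the set. -/
def IsPerfectMatching {V : Type*} (G : SimpleGraph V) (M : Set (Sym2 V)) : Prop :=
  M ⊆ G.edgeSet ∧ ∀ v : V, ∃! e : Sym2 V, e ∈ M ∧ v ∈ e

/-- `c` is a PMValid `k`-edge-colouring of `G`: it colours the edges of `G` with colours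
in `{1, …, k}`, every perfect matching of `G` is monochromatic under `c`, and every
colour class contains a perfect matching. -/
def PMValid {V : Type*} (G : SimpleGraph V) (c : Sym2 V → ℕ) (k : ℕ) : Prop :=
  (∀ e ∈ G.edgeSet, c e ∈ Finset.Icc 1 k) ∧
  (∀ M : Set (Sym2 V), IsPerfectMatching G M → ∀ e ∈ M, ∀ e' ∈ M, c e = c e') ∧
  (∀ i ∈ Finset.Icc 1 k, ∃ M : Set (Sym2 V), IsPerfectMatching G M ∧ ∀ e ∈ M, c e = i)

/-- The weight of a set of edges (e.g. of a perfect matching): the product of its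
edge weights. -/
noncomputable def pmWeight {V : Type*} (w : Sym2 V → ℂ) (M : Set (Sym2 V)) : ℂ :=
  ∏ᶠ e ∈ M, w e

/-- The weight of a graph: the sum of the weights of its perfect matchings
(`0` if it has none). -/
noncomputable def graphWeight {V : Type*} (G : SimpleGraph V) (w : Sym2 V → ℂ) : ℂ :=
  ∑ᶠ M ∈ {M : Set (Sym2 V) | IsPerfectMatching G M}, pmWeight w M

/-- The subgraph of `G` filtered by the vertex colouring `vc`, with respect to the
generalized edge-colouring `c` on darts (half-edges): it keeps exactly those edges
`{u, v}` of `G` whose dart at `u` is coloured `vc u` and whose dart at `v` is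
coloured `vc v`. -/
def filtered {V : Type*} (G : SimpleGraph V) (c : G.Dart → ℕ) (vc : V → ℕ) :
    SimpleGraph V where
  Adj u v := ∃ h : G.Adj u v, c ⟨(u, v), h⟩ = vc u ∧ c ⟨(v, u), h.symm⟩ = vc v
  symm := by
    constructor
    rintro u v ⟨h, h1, h2⟩
    exact ⟨h.symm, h2, h1⟩
  loopless := by
    constructor
    rintro v ⟨h, -⟩
    exact G.irrefl h

/-- The weight of a vertex colouring `vc`: the weight of the filtered subgraph. -/
noncomputable def vcWeight {V : Type*} (G : SimpleGraph V) (c : G.Dart → ℕ)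
    (w : Sym2 V → ℂ) (vc : V → ℕ) : ℂ :=
  graphWeight (filtered G c vc) w

/-- The pair `(c, w)` of a generalized edge-colouring (on darts) and a weighting
is `k`-valid: all edge weights are nonzero, and there are `k` distinct colours such
that each of the `k` constant (monochromatic) vertex colourings with one of these
colour values has weight `1`, and every other vertex colouring has weight `0`. -/
def IsKValid {V : Type*} (G : SimpleGraph V) (c : G.Dart → ℕ) (w : Sym2 V → ℂ)
    (k : ℕ) : Prop :=
  (∀ e ∈ G.edgeSet, w e ≠ 0) ∧
  ∃ S : Finset ℕ, S.card = k ∧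
    (∀ i ∈ S, vcWeight G c w (fun _ => i) = 1) ∧
    ∀ vc : V → ℕ, (¬ ∃ i ∈ S, vc = fun _ => i) → vcWeight G c w vc = 0

/-- The weighted matching index `μ̄(G)`: the largest `k` for which some pair `(c, w)`
is `k`-valid (`0` if there is none). -/
noncomputable def muBar {V : Type*} (G : SimpleGraph V) : ℕ :=
  sSup {k | ∃ (c : G.Dart → ℕ) (w : Sym2 V → ℂ), IsKValid G c w k}


lemma exists_dart_colour {V : Type*} [Fintype V] (G : SimpleGraph V) [DecidableRel G.Adj]
    (c : G.Dart → ℕ) (w : Sym2 V → ℂ) (i : ℕ)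
    (h1 : vcWeight G c w (fun _ => i) = 1) (v : V) :
    ∃ u, ∃ hadj : G.Adj v u, c ⟨(v, u), hadj⟩ = i := by
  set G' := filtered G c (fun _ => i) with hG'
  have hne : {M | IsPerfectMatching G' M}.Nonempty := by
    by_contra hempty
    rw [Set.not_nonempty_iff_eq_empty] at hempty
    have h0 : vcWeight G c w (fun _ => i) = 0 := by
      rw [vcWeight, graphWeight, ← hG', hempty, finsum_mem_empty]
    rw [h1] at h0
    exact one_ne_zero h0
  obtain ⟨M, hM⟩ := hne
  obtain ⟨e, ⟨heM, hve⟩, -⟩ := hM.2 v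
  have he : e ∈ G'.edgeSet := hM.1 heM
  clear heM
  revert he hve
  induction e using Sym2.ind with
  | _ a b =>
    intro hve he
    rw [SimpleGraph.mem_edgeSet] at he
    rcases Sym2.mem_iff.mp hve with rfl | rfl
    · obtain ⟨hadj, hc1, hc2⟩ := he
      exact ⟨b, hadj, hc1⟩
    · obtain ⟨hadj, hc1, hc2⟩ := he.symm
      exact ⟨a, hadj, hc1⟩

lemma aux_degree {V : Type*} [Fintype V] (G : SimpleGraph V) [DecidableRel G.Adj]
    (c : G.Dart → ℕ) (w : Sym2 V → ℂ) (k : ℕ) (h : IsKValid G c w k) (v : V) :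
    k ≤ G.degree v := by
  obtain ⟨hw, S, hcard, hS1, hS0⟩ := h
  have key : ∀ i : ℕ, ∃ u, i ∈ S → ∃ hadj : G.Adj v u, c ⟨(v, u), hadj⟩ = i := by
    intro i
    by_cases hi : i ∈ S
    · obtain ⟨u, hu⟩ := exists_dart_colour G c w i (hS1 i hi) v
      exact ⟨u, fun _ => hu⟩
    · exact ⟨v, fun h' => absurd h' hi⟩
  choose f hf using key
  rw [← hcard, ← SimpleGraph.card_neighborFinset_eq_degree]
  apply Finset.card_le_card_of_injOn f
  · intro i hi
    obtain ⟨hadj, -⟩ := hf i hi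
    exact (SimpleGraph.mem_neighborFinset G v (f i)).mpr hadj
  · intro i hi j hj hij
    obtain ⟨hadji, hci⟩ := hf i hi
    obtain ⟨hadjj, hcj⟩ := hf j hj
    rw [← hci, ← hcj]
    congr 1
    apply SimpleGraph.Dart.ext
    show (v, f i) = (v, f j)
    rw [hij]

lemma aux_empty {V : Type*} [Fintype V] (G : SimpleGraph V) [DecidableRel G.Adj]
    (c : G.Dart → ℕ) (w : Sym2 V → ℂ) (hV : IsEmpty V) (k' : ℕ) (hk' : 1 ≤ k') :
    IsKValid G c w k' := by
  have hsym2 : ∀ e : Sym2 V, False := by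
    intro e
    induction e using Sym2.ind with
    | _ a b => exact hV.elim a
  have hPM : ∀ G' : SimpleGraph V, {M | IsPerfectMatching G' M} = {∅} := by
    intro G'
    ext M
    simp only [Set.mem_setOf_eq, Set.mem_singleton_iff]
    constructor
    · rintro ⟨hsub, -⟩
      ext e
      exact (hsym2 e).elim
    · rintro rfl
      exact ⟨Set.empty_subset _, fun v => hV.elim v⟩
  have hweight : ∀ vc : V → ℕ, vcWeight G c w vc = 1 := by
    intro vc
    rw [vcWeight, graphWeight, hPM, finsum_mem_singleton, pmWeight, finprod_mem_empty]
  refine ⟨fun e he => (hsym2 e).elim, Finset.range k', Finset.card_range k',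
    fun i _ => hweight _, ?_⟩
  intro vc hvc
  exfalso
  exact hvc ⟨0, Finset.mem_range.mpr hk', funext fun v => hV.elim v⟩

theorem statement_17 {V : Type*} [Fintype V] (G : SimpleGraph V) [DecidableRel G.Adj]
    (c : G.Dart → ℕ) (w : Sym2 V → ℂ) (k : ℕ) (hk : 1 ≤ k)
    (h : IsKValid G c w k) :
    (∀ v : V, k ≤ G.degree v) ∧ muBar G ≤ G.minDegree := by
  refine ⟨aux_degree G c w k h, ?_⟩
  by_cases hV : Nonempty V
  · rw [muBar]
    refine csSup_le ⟨k, c, w, h⟩ ?_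
    rintro k' ⟨c', w', h'⟩
    exact SimpleGraph.le_minDegree_of_forall_le_degree G k' (aux_degree G c' w' k' h')
  · have hE : IsEmpty V := not_nonempty_iff.mp hV
    have hub : ¬ BddAbove {k | ∃ (c : G.Dart → ℕ) (w : Sym2 V → ℂ), IsKValid G c w k} := by
      rintro ⟨n, hn⟩
      have hmem : n + 1 ∈ {k | ∃ (c : G.Dart → ℕ) (w : Sym2 V → ℂ), IsKValid G c w k} :=
        by exact ⟨c, w, aux_empty G c w hE (n + 1) (by omega)⟩
      have hle : n + 1 ≤ n := hn hmem
      omega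
    rw [muBar, csSup_of_not_bddAbove hub, csSup_empty]
    exact bot_le
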